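/- arXiv:1810.07510 — 5 statements merged into one kernel-verified Lean document; each statement's English description precedes it below -/
import Mathlib

section
/- For every real ε with 0 < ε < 1, every natural number m, every finite set J and every function p : J → ℝ with 0 ≤ p j for all j ∈ J and ∑_{j ∈ J} p j ≤ m, there exists a natural number k with 1 ≤ k ≤ ⌈1/ε²⌉ such that ∑_{j ∈ J, ε^{k+1} ≤ p j < ε^k} p j ≤ ε² · m. -/
theorem stmt_0 (ε : ℝ) (hε0 : 0 < ε) (hε1 : ε < 1) (m : ℕ)
    {J : Type*} [Fintype J] (p : J → ℝ)
    (hp : ∀ j, 0 ≤ p j) (hsum : ∑ j, p j ≤ (m : ℝ)) :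
    ∃ k : ℕ, 1 ≤ k ∧ k ≤ ⌈1 / ε ^ 2⌉₊ ∧
      ∑ j ∈ Finset.univ.filter (fun j => ε ^ (k + 1) ≤ p j ∧ p j < ε ^ k), p j
        ≤ ε ^ 2 * (m : ℝ) := by
  set N := ⌈1 / ε ^ 2⌉₊ with hN
  have hε2 : (0:ℝ) < ε ^ 2 := by positivity
  have hN1 : 1 ≤ N := Nat.one_le_ceil_iff.mpr (by positivity)
  have hNceil : 1 / ε ^ 2 ≤ (N : ℝ) := Nat.le_ceil _
  by_contra h
  push_neg at h
  set S : ℕ → Finset J := fun k =>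
    Finset.univ.filter (fun j => ε ^ (k + 1) ≤ p j ∧ p j < ε ^ k) with hS
  -- pairwise disjoint
  have hdisj : ∀ k ∈ Finset.Icc 1 N, ∀ l ∈ Finset.Icc 1 N, k ≠ l →
      Disjoint (S k) (S l) := by
    intro k _ l _ hkl
    wlog hlt : k < l generalizing k l
    · exact (this l ‹_› k ‹_› hkl.symm (by omega)).symm
    refine Finset.disjoint_left.mpr ?_
    intro j hjk hjl
    simp only [hS, Finset.mem_filter] at hjk hjl
    have h1 : ε ^ l ≤ ε ^ (k + 1) :=
      pow_le_pow_of_le_one hε0.le hε1.le (by omega)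
    have := lt_of_lt_of_le hjl.2.2 (h1.trans hjk.2.1)
    exact lt_irrefl _ this
  classical
  have hsub : ∑ k ∈ Finset.Icc 1 N, ∑ j ∈ S k, p j ≤ ∑ j, p j := by
    rw [← Finset.sum_biUnion hdisj]
    exact Finset.sum_le_sum_of_subset_of_nonneg (Finset.subset_univ _)
      (fun j _ _ => hp j)
  have hlt : (N : ℝ) * (ε ^ 2 * m) < ∑ k ∈ Finset.Icc 1 N, ∑ j ∈ S k, p j := by
    have hcard : (Finset.Icc 1 N).card = N := by
      rw [Nat.card_Icc]; omega
    calc (N : ℝ) * (ε ^ 2 * m) = ∑ _k ∈ Finset.Icc 1 N, ε ^ 2 * m := by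
          rw [Finset.sum_const, hcard, nsmul_eq_mul]
      _ < _ := by
          refine Finset.sum_lt_sum_of_nonempty ?_ ?_
          · exact ⟨1, Finset.mem_Icc.mpr ⟨le_refl _, hN1⟩⟩
          · intro k hk
            rw [Finset.mem_Icc] at hk
            exact h k hk.1 hk.2
  have hm : (m : ℝ) ≤ (N : ℝ) * (ε ^ 2 * m) := by
    have h1 : (1:ℝ) ≤ (N : ℝ) * ε ^ 2 := by
      rw [div_le_iff₀ hε2] at hNceil
      linarith
    calc (m : ℝ) = 1 * m := (one_mul _).symm
      _ ≤ (N : ℝ) * ε ^ 2 * m := by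
          exact mul_le_mul_of_nonneg_right h1 (Nat.cast_nonneg m)
      _ = (N : ℝ) * (ε ^ 2 * m) := by ring
  linarith
end

section
/- Let ε be a real number with 0 < ε ≤ 1, let k be a natural number, let C ≥ 0 be real, let J be a finite set with p : J → ℝ satisfying 0 ≤ p j for all j, let σ : J → Fin m be a schedule such that for every machine i the load ∑_{j : σ j = i} p j is at most C, and let L ⊆ J be a set of jobs with p j ≥ ε^k for every j ∈ L. Then for every machine i we have (∑_{j : σ j = i} p j) + ε^{k+1} · |{j ∈ L : σ j = i}| ≤ (1 + ε) · C. -/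
theorem stmt_1 {m : ℕ} (ε : ℝ) (hε0 : 0 < ε) (hε1 : ε ≤ 1)
    (k : ℕ) (C : ℝ) (hC : 0 ≤ C)
    {J : Type*} [Fintype J] (p : J → ℝ) (hp : ∀ j, 0 ≤ p j)
    (σ : J → Fin m)
    (hload : ∀ i : Fin m, ∑ j ∈ Finset.univ.filter (fun j => σ j = i), p j ≤ C)
    (L : Finset J) (hL : ∀ j ∈ L, ε ^ k ≤ p j) :
    ∀ i : Fin m,
      (∑ j ∈ Finset.univ.filter (fun j => σ j = i), p j)
        + ε ^ (k + 1) * ((L.filter (fun j => σ j = i)).card : ℝ)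
      ≤ (1 + ε) * C := by
  intro i
  set S := L.filter (fun j => σ j = i) with hS
  have h1 : ε ^ k * (S.card : ℝ) ≤ C := by
    calc ε ^ k * (S.card : ℝ) = ∑ _j ∈ S, ε ^ k := by
          rw [Finset.sum_const, nsmul_eq_mul, mul_comm]
      _ ≤ ∑ j ∈ S, p j := Finset.sum_le_sum (fun j hj => hL j (Finset.mem_filter.mp hj).1)
      _ ≤ ∑ j ∈ Finset.univ.filter (fun j => σ j = i), p j := by
          apply Finset.sum_le_sum_of_subset_of_nonneg
          · intro j hj
            simp [(Finset.mem_filter.mp hj).2]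
          · intro j _ _; exact hp j
      _ ≤ C := hload i
  have h2 : ε ^ (k + 1) * (S.card : ℝ) ≤ ε * C := by
    rw [pow_succ, mul_comm (ε ^ k) ε, mul_assoc]
    exact mul_le_mul_of_nonneg_left h1 hε0.le
  calc _ ≤ C + ε * C := add_le_add (hload i) h2
    _ = (1 + ε) * C := by ring
end

section
/- Let J be a finite set of jobs with sizes p : J → ℝ, 0 ≤ p j for all j, a bag assignment bag : J → Fin b, m machines, a real ε with 0 < ε < 1, and a natural number k ≥ 1. Let NP ⊆ Fin b be a set of bags such that every bag l ∈ NP contains at least one job j with p j < ε^{k+1}, and for l ∈ NP let pmax l be the maximum of p j over jobs j of bag l with p j < ε^{k+1}. Define the modified instance with job set J' = J ⊕ {j ∈ J : bag j ∈ NP and p j ≥ ε^k}, sizes p'(Sum.inl j) = pmax (bag j) if bag j ∈ NP and p j ≥ ε^{k+1} and p'(Sum.inl j) = p j otherwise, p'(Sum.inr j) = p j, and bag assignment bag' : J' → (Fin b ⊕ Fin b) with bag'(Sum.inl j) = Sum.inl (bag j) and bag'(Sum.inr j) = Sum.inr (bag j). If there exists a feasible schedule of J on m machines with makespan at most C (C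 ≥ 0), then there exists a feasible schedule of J' on m machines with makespan at most (1 + ε) · C. -/
attribute [local instance] Classical.propDecidable

theorem stmt_2 {J : Type*} [Fintype J] {b : ℕ} (m : ℕ)
    (p : J → ℝ) (hp : ∀ j, 0 ≤ p j)
    (bag : J → Fin b)
    (ε : ℝ) (hε0 : 0 < ε) (hε1 : ε < 1)
    (k : ℕ) (hk : 1 ≤ k)
    (NP : Finset (Fin b))
    (hNP : ∀ l ∈ NP, ∃ j, bag j = l ∧ p j < ε ^ (k + 1))
    (pmax : Fin b → ℝ)
    (hpmaxUB : ∀ l ∈ NP, ∀ j, bag j = l → p j < ε ^ (k + 1) → p j ≤ pmax l)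
    (hpmaxMem : ∀ l ∈ NP, ∃ j, bag j = l ∧ p j < ε ^ (k + 1) ∧ pmax l = p j)
    (C : ℝ) (hC : 0 ≤ C)
    (hsched : ∃ σ : J → Fin m,
      (∀ j₁ j₂, j₁ ≠ j₂ → bag j₁ = bag j₂ → σ j₁ ≠ σ j₂) ∧
      (∀ i : Fin m, ∑ j ∈ Finset.univ.filter (fun j => σ j = i), p j ≤ C)) :
    ∃ σ' : (J ⊕ {j : J // bag j ∈ NP ∧ ε ^ k ≤ p j}) → Fin m,
      (∀ x y, x ≠ y →
          Sum.elim (fun j => (Sum.inl (bag j) : Fin b ⊕ Fin b))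
            (fun j => Sum.inr (bag j.1)) x
            = Sum.elim (fun j => (Sum.inl (bag j) : Fin b ⊕ Fin b))
                (fun j => Sum.inr (bag j.1)) y
          → σ' x ≠ σ' y) ∧
      (∀ i : Fin m,
        ∑ x ∈ Finset.univ.filter (fun x => σ' x = i),
          Sum.elim
            (fun j => if bag j ∈ NP ∧ ε ^ (k + 1) ≤ p j then pmax (bag j) else p j)
            (fun j => p j.1) x
          ≤ (1 + ε) * C) := by
  obtain ⟨σ, h1, h2⟩ := hsched
  have hpmax_lt : ∀ l ∈ NP, pmax l < ε ^ (k + 1) := by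
    intro l hl
    obtain ⟨j, _, hj2, hj3⟩ := hpmaxMem l hl
    rw [hj3]; exact hj2
  refine ⟨Sum.elim σ (fun j => σ j.1), ?_, ?_⟩
  · intro x y hxy hbag
    cases x with
    | inl a =>
      cases y with
      | inl c =>
        simp only [Sum.elim_inl, Sum.inl.injEq] at hbag ⊢
        exact h1 a c (by rintro rfl; exact hxy rfl) hbag
      | inr c => simp at hbag
    | inr a =>
      cases y with
      | inl c => simp at hbag
      | inr c =>
        simp only [Sum.elim_inr, Sum.inr.injEq] at hbag ⊢
        refine h1 a.1 c.1 ?_ hbag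
        intro h
        exact hxy (by rw [Subtype.ext h])
  · intro i
    have key : ∀ j : J,
        (if σ j = i then
          (if bag j ∈ NP ∧ ε ^ (k + 1) ≤ p j then pmax (bag j) else p j) else 0)
        + (if bag j ∈ NP ∧ ε ^ k ≤ p j then (if σ j = i then p j else 0) else 0)
        ≤ (1 + ε) * (if σ j = i then p j else 0) := by
      intro j
      by_cases hσ : σ j = i
      · simp only [hσ, if_true]
        by_cases hlarge : bag j ∈ NP ∧ ε ^ k ≤ p j
        · have hmed : bag j ∈ NP ∧ ε ^ (k + 1) ≤ p j := by
            refine ⟨hlarge.1, ?_⟩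
            calc ε ^ (k + 1) ≤ ε ^ k := pow_le_pow_of_le_one hε0.le hε1.le (by omega)
            _ ≤ p j := hlarge.2
          rw [if_pos hmed, if_pos hlarge]
          have h3 : pmax (bag j) ≤ ε * p j := by
            have := hpmax_lt _ hlarge.1
            calc pmax (bag j) ≤ ε ^ (k + 1) := this.le
            _ = ε * ε ^ k := by ring
            _ ≤ ε * p j := by nlinarith [hlarge.2]
          nlinarith [hp j]
        · rw [if_neg hlarge]
          by_cases hmed : bag j ∈ NP ∧ ε ^ (k + 1) ≤ p j
          · rw [if_pos hmed]
            have := (hpmax_lt _ hmed.1).le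
            nlinarith [hp j, hmed.2]
          · rw [if_neg hmed]
            nlinarith [hp j]
      · simp [hσ, if_neg hσ]
    have hsubty : (∑ j : {j : J // bag j ∈ NP ∧ ε ^ k ≤ p j},
          (if σ j.1 = i then p j.1 else 0))
        = ∑ j : J, (if bag j ∈ NP ∧ ε ^ k ≤ p j then (if σ j = i then p j else 0) else 0) := by
      rw [← Finset.subtype_univ, Finset.sum_subtype_eq_sum_filter (f := fun j => if σ j = i then p j else 0), Finset.sum_filter]
    calc ∑ x ∈ Finset.univ.filter
          (fun x => Sum.elim σ (fun j : {j : J // bag j ∈ NP ∧ ε ^ k ≤ p j} => σ j.1) x = i),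
          Sum.elim
            (fun j => if bag j ∈ NP ∧ ε ^ (k + 1) ≤ p j then pmax (bag j) else p j)
            (fun j : {j : J // bag j ∈ NP ∧ ε ^ k ≤ p j} => p j.1) x
        = ∑ x : (J ⊕ {j : J // bag j ∈ NP ∧ ε ^ k ≤ p j}),
          (if Sum.elim σ (fun j : {j : J // bag j ∈ NP ∧ ε ^ k ≤ p j} => σ j.1) x = i then
            Sum.elim
              (fun j => if bag j ∈ NP ∧ ε ^ (k + 1) ≤ p j then pmax (bag j) else p j)
              (fun j : {j : J // bag j ∈ NP ∧ ε ^ k ≤ p j} => p j.1) x else 0) := Finset.sum_filter _ _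
      _ = (∑ j : J, (if σ j = i then
            (if bag j ∈ NP ∧ ε ^ (k + 1) ≤ p j then pmax (bag j) else p j) else 0))
          + ∑ j : {j : J // bag j ∈ NP ∧ ε ^ k ≤ p j}, (if σ j.1 = i then p j.1 else 0) := by
            rw [Fintype.sum_sum_type]
            simp only [Sum.elim_inl, Sum.elim_inr]
            congr!
      _ = ∑ j : J, ((if σ j = i then
            (if bag j ∈ NP ∧ ε ^ (k + 1) ≤ p j then pmax (bag j) else p j) else 0)
          + (if bag j ∈ NP ∧ ε ^ k ≤ p j then (if σ j = i then p j else 0) else 0)) := by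
            rw [hsubty, ← Finset.sum_add_distrib]
      _ ≤ ∑ j : J, (1 + ε) * (if σ j = i then p j else 0) :=
            Finset.sum_le_sum (fun j _ => key j)
      _ = (1 + ε) * ∑ j ∈ Finset.univ.filter (fun j => σ j = i), p j := by
            rw [← Finset.mul_sum, Finset.sum_filter]
      _ ≤ (1 + ε) * C := by
            have := h2 i
            nlinarith [hε0]
end

section
/- Let m, r be natural numbers, let n : Fin r → ℕ, and let F : Fin r → Finset (Fin m) be such that for every l, |F l| < m and n l ≤ m - |F l|. Then there exist functions g : (l : Fin r) → Fin (n l) → Fin m such that (i) for each l, g l is injective; (ii) for each l and each a : Fin (n l), g l a ∉ F l; and (iii) for every machine i : Fin m, ∑_{l} |{a : Fin (n l) | g l a = i}| ≤ ⌈∑_{l} (n l : ℝ) / (m - |F l|)⌉. -/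
open Finset

private lemma stmt4_perl (a nl u fib : ℝ) (ha : 0 < a) (hna : nl ≤ a) (hn0 : 0 ≤ nl)
    (hfa : fib ≤ a) (hfu : fib ≤ u) : fib ≤ nl / a * u + (a - nl) := by
  rw [← sub_nonneg]
  have expand : nl / a * u + (a - nl) - fib = (nl * u + (a - nl) * a - fib * a) / a := by
    field_simp
  rw [expand]
  apply div_nonneg _ ha.le
  nlinarith [mul_nonneg (sub_nonneg.2 hfa) (sub_nonneg.2 hna),
    mul_le_mul_of_nonneg_left hfu hn0]

private lemma stmt4_aux (m r : ℕ) (n : Fin r → ℕ) (F : Fin r → Finset (Fin m)) (C : ℕ)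
    (hF : ∀ l, (F l).card < m) (hn : ∀ l, n l ≤ m - (F l).card)
    (hC : ∑ l, (n l : ℝ) / ((m : ℝ) - ((F l).card : ℝ)) ≤ C) :
    ∃ S : Fin r → Finset (Fin m),
      (∀ l, S l ⊆ (F l)ᶜ) ∧ (∀ l, (S l).card = n l) ∧
      (∀ i : Fin m, (Finset.univ.filter fun l => i ∈ S l).card ≤ C) := by
  classical
  set A : Fin r → Finset (Fin m) := fun l => (F l)ᶜ with hAdef
  have hAcard : ∀ l, (A l).card = m - (F l).card := by
    intro l; simp [hAdef, Finset.card_compl]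
  have hApos : ∀ l, 0 < (A l).card := by
    intro l; rw [hAcard]; have := hF l; omega
  have hnA : ∀ l, n l ≤ (A l).card := by
    intro l; rw [hAcard]; exact hn l
  have hcastA : ∀ l, ((A l).card : ℝ) = (m : ℝ) - ((F l).card : ℝ) := by
    intro l
    rw [hAcard, Nat.cast_sub (le_of_lt (hF l))]
  set t : {p : Fin r × Fin m // p.2 ∈ A p.1} → Finset ((Fin m × Fin C) ⊕ (Fin r × ℕ)) :=
    fun p =>
      (({p.val.2} ×ˢ (Finset.univ : Finset (Fin C))).image Sum.inl) ∪
      (({p.val.1} ×ˢ Finset.range ((A p.val.1).card - n p.val.1)).image Sum.inr) with htdef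
  have hall : ∀ W : Finset {p : Fin r × Fin m // p.2 ∈ A p.1},
      W.card ≤ (W.biUnion t).card := by
    intro W
    set U : Finset (Fin m) := W.image (fun p => p.val.2) with hU
    set B : Finset (Fin r) := W.image (fun p => p.val.1) with hB
    have hsub : ((U ×ˢ (Finset.univ : Finset (Fin C))).image Sum.inl ∪
        (B.biUnion fun l => ({l} ×ˢ Finset.range ((A l).card - n l)).image Sum.inr))
        ⊆ W.biUnion t := by
      intro x hx
      rcases Finset.mem_union.mp hx with hx | hx
      · obtain ⟨⟨i, c⟩, hic, rfl⟩ := Finset.mem_image.mp hx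
        obtain ⟨hi, -⟩ := Finset.mem_product.mp hic
        obtain ⟨p, hp, hpi⟩ := Finset.mem_image.mp hi
        refine Finset.mem_biUnion.mpr ⟨p, hp, ?_⟩
        refine Finset.mem_union_left _ (Finset.mem_image.mpr ⟨(i, c), ?_, rfl⟩)
        simp [hpi]
      · obtain ⟨l, hl, hx⟩ := Finset.mem_biUnion.mp hx
        obtain ⟨⟨l', j⟩, hlj, rfl⟩ := Finset.mem_image.mp hx
        obtain ⟨hl', hj⟩ := Finset.mem_product.mp hlj
        have hll : l' = l := by simpa using hl'
        subst hll
        obtain ⟨p, hp, hpl⟩ := Finset.mem_image.mp hl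
        refine Finset.mem_biUnion.mpr ⟨p, hp, ?_⟩
        refine Finset.mem_union_right _ (Finset.mem_image.mpr ⟨(l', j), ?_, rfl⟩)
        rw [Finset.mem_product]
        refine ⟨by simp [hpl], by rw [hpl]; exact hj⟩
    have hdisj : Disjoint ((U ×ˢ (Finset.univ : Finset (Fin C))).image Sum.inl)
        (B.biUnion fun l => ({l} ×ˢ Finset.range ((A l).card - n l)).image Sum.inr) := by
      rw [Finset.disjoint_left]
      rintro x hx hx'
      obtain ⟨a, -, rfl⟩ := Finset.mem_image.mp hx
      obtain ⟨l, -, hx'⟩ := Finset.mem_biUnion.mp hx'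
      obtain ⟨b, -, hb⟩ := Finset.mem_image.mp hx'
      simp at hb
    have hcard1 : ((U ×ˢ (Finset.univ : Finset (Fin C))).image
        (Sum.inl : _ → (Fin m × Fin C) ⊕ (Fin r × ℕ))).card = U.card * C := by
      rw [Finset.card_image_of_injective _ (Sum.inl_injective (α := Fin m × Fin C) (β := Fin r × ℕ)), Finset.card_product]
      simp
    have hcard2 : (B.biUnion fun l =>
        ({l} ×ˢ Finset.range ((A l).card - n l)).image
          (Sum.inr : _ → (Fin m × Fin C) ⊕ (Fin r × ℕ))).card
        = ∑ l ∈ B, ((A l).card - n l) := by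
      rw [Finset.card_biUnion]
      · refine Finset.sum_congr rfl fun l _ => ?_
        rw [Finset.card_image_of_injective _ (Sum.inr_injective (α := Fin m × Fin C) (β := Fin r × ℕ)), Finset.card_product]
        simp
      · intro x _ y _ hxy
        rw [Function.onFun, Finset.disjoint_left]
        rintro z hz hz'
        obtain ⟨a, ha, rfl⟩ := Finset.mem_image.mp hz
        obtain ⟨b, hb, hba⟩ := Finset.mem_image.mp hz'
        have hba' : b = a := Sum.inr_injective hba
        subst hba'
        obtain ⟨ha1, -⟩ := Finset.mem_product.mp ha
        obtain ⟨hb1, -⟩ := Finset.mem_product.mp hb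
        simp only [Finset.mem_singleton] at ha1 hb1
        exact hxy (by rw [← ha1, ← hb1])
    have hbig : U.card * C + ∑ l ∈ B, ((A l).card - n l) ≤ (W.biUnion t).card := by
      calc U.card * C + ∑ l ∈ B, ((A l).card - n l)
          = ((U ×ˢ (Finset.univ : Finset (Fin C))).image Sum.inl ∪
            (B.biUnion fun l => ({l} ×ˢ Finset.range ((A l).card - n l)).image Sum.inr)).card := by
            rw [Finset.card_union_of_disjoint hdisj, hcard1, hcard2]
        _ ≤ _ := Finset.card_le_card hsub
    have hWcard : W.card = ∑ l ∈ B, (W.filter fun p => p.val.1 = l).card := by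
      apply Finset.card_eq_sum_card_fiberwise
      intro p hp
      exact Finset.mem_image.mpr ⟨p, hp, rfl⟩
    have hfibA : ∀ l, (W.filter fun p => p.val.1 = l).card ≤ (A l).card := by
      intro l
      have hinj : Set.InjOn (fun p : {p : Fin r × Fin m // p.2 ∈ A p.1} => p.val.2)
          ↑(W.filter fun p => p.val.1 = l) := by
        intro p hp q hq hpq
        simp only [Finset.coe_filter, Set.mem_setOf_eq] at hp hq
        ext
        · rw [hp.2, hq.2]
        · exact congrArg Fin.val hpq
      rw [← Finset.card_image_of_injOn hinj]
      apply Finset.card_le_card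
      intro i hi
      obtain ⟨p, hp, rfl⟩ := Finset.mem_image.mp hi
      have h1 := (Finset.mem_filter.mp hp).2
      have hprop := p.property
      rwa [h1] at hprop
    have hfibU : ∀ l, (W.filter fun p => p.val.1 = l).card ≤ U.card := by
      intro l
      have hinj : Set.InjOn (fun p : {p : Fin r × Fin m // p.2 ∈ A p.1} => p.val.2)
          ↑(W.filter fun p => p.val.1 = l) := by
        intro p hp q hq hpq
        simp only [Finset.coe_filter, Set.mem_setOf_eq] at hp hq
        ext
        · rw [hp.2, hq.2]
        · exact congrArg Fin.val hpq
      rw [← Finset.card_image_of_injOn hinj]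
      apply Finset.card_le_card
      intro i hi
      obtain ⟨p, hp, rfl⟩ := Finset.mem_image.mp hi
      exact Finset.mem_image.mpr ⟨p, (Finset.mem_filter.mp hp).1, rfl⟩
    -- real-valued comparison
    have key : (W.card : ℝ) ≤ ((U.card * C + ∑ l ∈ B, ((A l).card - n l) : ℕ) : ℝ) := by
      have hRHS : ((U.card * C + ∑ l ∈ B, ((A l).card - n l) : ℕ) : ℝ)
          = (U.card : ℝ) * C + ∑ l ∈ B, (((A l).card : ℝ) - (n l : ℝ)) := by
        push_cast
        congr 1
        refine Finset.sum_congr rfl fun l _ => ?_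
        rw [Nat.cast_sub (hnA l)]
      rw [hRHS, hWcard]
      push_cast
      have step1 : ∑ l ∈ B, ((W.filter fun p => p.val.1 = l).card : ℝ)
          ≤ ∑ l ∈ B, ((n l : ℝ) / ((A l).card : ℝ) * U.card + (((A l).card : ℝ) - n l)) := by
        refine Finset.sum_le_sum fun l _ => ?_
        refine stmt4_perl _ _ _ _ ?_ ?_ ?_ ?_ ?_
        · exact_mod_cast hApos l
        · exact_mod_cast hnA l
        · positivity
        · exact_mod_cast hfibA l
        · exact_mod_cast hfibU l
      refine le_trans step1 ?_
      rw [Finset.sum_add_distrib]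
      gcongr ?_ + _
      rw [← Finset.sum_mul]
      have hsumB : ∑ l ∈ B, (n l : ℝ) / ((A l).card : ℝ) ≤ (C : ℝ) := by
        refine le_trans ?_ hC
        have : ∀ l, (n l : ℝ) / ((A l).card : ℝ)
            = (n l : ℝ) / ((m : ℝ) - ((F l).card : ℝ)) := fun l => by rw [hcastA l]
        simp_rw [this]
        refine Finset.sum_le_sum_of_subset_of_nonneg (Finset.subset_univ B) ?_
        intro l _ _
        have hden : (0:ℝ) < (m : ℝ) - ((F l).card : ℝ) := by
          rw [← hcastA l]; exact_mod_cast hApos l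
        positivity
      have hu : (0:ℝ) ≤ (U.card : ℝ) := by positivity
      calc (∑ l ∈ B, (n l : ℝ) / ((A l).card : ℝ)) * (U.card : ℝ)
          ≤ (C : ℝ) * (U.card : ℝ) := by
            exact mul_le_mul_of_nonneg_right hsumB hu
        _ = (U.card : ℝ) * C := by ring
    exact le_trans (Nat.cast_le.mp key) hbig
  obtain ⟨f, hfinj, hft⟩ :=
    (Finset.all_card_le_biUnion_card_iff_exists_injective t).mp hall
  -- extraction
  have hSl : ∀ l : Fin r, ∃ S : Finset (Fin m), S ⊆ A l ∧ S.card = n l ∧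
      ∀ i (h : i ∈ A l), i ∈ S → (f ⟨(l, i), h⟩).isLeft := by
    intro l
    set Good : Finset {i // i ∈ A l} :=
      (A l).attach.filter (fun i => (f ⟨(l, i.val), i.property⟩).isLeft) with hGood
    set Bad : Finset {i // i ∈ A l} :=
      (A l).attach.filter (fun i => ¬ (f ⟨(l, i.val), i.property⟩).isLeft) with hBad
    have hBadCard : Bad.card ≤ (A l).card - n l := by
      have hmap : ∀ i ∈ Bad, ∃ j : ℕ, j ∈ Finset.range ((A l).card - n l) ∧
          f ⟨(l, i.val), i.property⟩ = Sum.inr (l, j) := by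
        intro i hi
        have hnotleft := (Finset.mem_filter.mp hi).2
        have hmem := hft ⟨(l, i.val), i.property⟩
        rw [htdef] at hmem
        rcases Finset.mem_union.mp hmem with h | h
        · obtain ⟨a, -, ha⟩ := Finset.mem_image.mp h
          exact absurd (by rw [← ha]; rfl) hnotleft
        · obtain ⟨⟨l', j⟩, hlj, hval⟩ := Finset.mem_image.mp h
          obtain ⟨hl', hj⟩ := Finset.mem_product.mp hlj
          simp only [Finset.mem_singleton] at hl'
          subst hl'
          exact ⟨j, hj, hval.symm⟩
      choose φ hφmem hφval using hmap
      have hinj : ∀ i ∈ Bad.attach, ∀ j ∈ Bad.attach,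
          φ i.val i.property = φ j.val j.property → i = j := by
        intro i _ j _ hij
        have : f ⟨(l, i.val.val), i.val.property⟩ = f ⟨(l, j.val.val), j.val.property⟩ := by
          rw [hφval i.val i.property, hφval j.val j.property, hij]
        have := hfinj this
        ext1; ext1
        exact congrArg (fun p => (Subtype.val p).2) this
      have := Finset.card_le_card_of_injOn (fun i : {x // x ∈ Bad} => φ i.val i.property)
        (fun i _ => hφmem i.val i.property) (fun i hi j hj hij => hinj i hi j hj hij)
      simpa using this
    have hGoodCard : n l ≤ Good.card := by
      have hsplit : Good.card + Bad.card = (A l).card := by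
        rw [hGood, hBad, Finset.card_filter_add_card_filter_not]
        simp
      have := hnA l
      omega
    obtain ⟨S₀, hS₀sub, hS₀card⟩ := Finset.exists_subset_card_eq hGoodCard
    refine ⟨S₀.image Subtype.val, ?_, ?_, ?_⟩
    · intro i hi
      obtain ⟨x, -, rfl⟩ := Finset.mem_image.mp hi
      exact x.property
    · rw [Finset.card_image_of_injective _ (Subtype.val_injective (p := fun i => i ∈ A l)), hS₀card]
    · intro i h hi
      obtain ⟨x, hx, hxi⟩ := Finset.mem_image.mp hi
      have hxGood := hS₀sub hx
      have := (Finset.mem_filter.mp hxGood).2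
      have hxeq : (⟨(l, x.val), x.property⟩ : {p : Fin r × Fin m // p.2 ∈ A p.1})
          = ⟨(l, i), h⟩ := by
        ext <;> simp [hxi]
      rwa [hxeq] at this
  choose S hSsub hScard hSleft using hSl
  refine ⟨S, hSsub, hScard, ?_⟩
  intro i
  set L : Finset (Fin r) := Finset.univ.filter (fun l => i ∈ S l) with hL
  have hmaps : ∀ l ∈ L, ∃ hi : i ∈ A l, ∃ c : Fin C,
      f ⟨(l, i), hi⟩ = Sum.inl (i, c) := by
    intro l hl
    have hiS : i ∈ S l := (Finset.mem_filter.mp hl).2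
    have hiA : i ∈ A l := hSsub l hiS
    have hleft := hSleft l i hiA hiS
    have hmem := hft ⟨(l, i), hiA⟩
    rw [htdef] at hmem
    rcases Finset.mem_union.mp hmem with h | h
    · obtain ⟨⟨i', c⟩, hic, hval⟩ := Finset.mem_image.mp h
      obtain ⟨hi', -⟩ := Finset.mem_product.mp hic
      simp only [Finset.mem_singleton] at hi'
      subst hi'
      exact ⟨hiA, c, hval.symm⟩
    · obtain ⟨a, -, ha⟩ := Finset.mem_image.mp h
      rw [← ha] at hleft
      simp at hleft
  have hcard : L.card ≤ C := by
    choose hiA c hc using hmaps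
    have hinj2 : ∀ l ∈ L.attach, ∀ l' ∈ L.attach,
        c l.val l.property = c l'.val l'.property → l = l' := by
      intro l _ l' _ hll
      have : f ⟨(l.val, i), hiA l.val l.property⟩ = f ⟨(l'.val, i), hiA l'.val l'.property⟩ := by
        rw [hc l.val l.property, hc l'.val l'.property, hll]
      have := hfinj this
      ext1
      exact congrArg (fun p => (Subtype.val p).1) this
    have := Finset.card_le_card_of_injOn
      (fun l : {x // x ∈ L} => c l.val l.property)
      (fun l _ => Finset.mem_univ (α := Fin C) _)
      (fun a ha b hb h => hinj2 a ha b hb h)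
    simpa using this
  exact hcard

theorem stmt_4 (m r : ℕ) (n : Fin r → ℕ) (F : Fin r → Finset (Fin m))
    (hF : ∀ l, (F l).card < m) (hn : ∀ l, n l ≤ m - (F l).card) :
    ∃ g : (l : Fin r) → Fin (n l) → Fin m,
      (∀ l, Function.Injective (g l)) ∧
      (∀ l a, g l a ∉ F l) ∧
      (∀ i : Fin m,
        (∑ l, (Finset.univ.filter (fun a : Fin (n l) => g l a = i)).card)
          ≤ ⌈∑ l, (n l : ℝ) / ((m : ℝ) - ((F l).card : ℝ))⌉₊) := by
  classical
  set C : ℕ := ⌈∑ l, (n l : ℝ) / ((m : ℝ) - ((F l).card : ℝ))⌉₊ with hCdef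
  obtain ⟨S, hSsub, hScard, hSload⟩ := stmt4_aux m r n F C hF hn (Nat.le_ceil _)
  refine ⟨fun l => fun a => ((S l).orderIsoOfFin (hScard l) a : Fin m), ?_, ?_, ?_⟩
  · intro l a b hab
    exact (Finset.orderIsoOfFin (S l) (hScard l)).injective (Subtype.ext hab)
  · intro l a
    have : ((S l).orderIsoOfFin (hScard l) a : Fin m) ∈ S l :=
      ((S l).orderIsoOfFin (hScard l) a).property
    have := hSsub l this
    simpa using this
  · intro i
    have hterm : ∀ l, (Finset.univ.filter
        (fun a : Fin (n l) => ((S l).orderIsoOfFin (hScard l) a : Fin m) = i)).card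
        = if i ∈ S l then 1 else 0 := by
      intro l
      by_cases hi : i ∈ S l
      · rw [if_pos hi]
        rw [Finset.card_eq_one]
        refine ⟨((S l).orderIsoOfFin (hScard l)).symm ⟨i, hi⟩, ?_⟩
        ext a
        simp only [Finset.mem_filter, Finset.mem_univ, true_and, Finset.mem_singleton]
        constructor
        · intro h
          have : (S l).orderIsoOfFin (hScard l) a = ⟨i, hi⟩ := Subtype.ext h
          rw [← this]
          simp
        · rintro rfl
          simp
      · rw [if_neg hi]
        rw [Finset.card_eq_zero]
        ext a
        simp only [Finset.mem_filter, Finset.mem_univ, true_and, Finset.notMem_empty,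
          iff_false]
        intro h
        exact hi (h ▸ ((S l).orderIsoOfFin (hScard l) a).property)
    calc ∑ l, (Finset.univ.filter
          (fun a : Fin (n l) => ((S l).orderIsoOfFin (hScard l) a : Fin m) = i)).card
        = ∑ l, (if i ∈ S l then 1 else 0) := Finset.sum_congr rfl fun l _ => hterm l
      _ = (Finset.univ.filter fun l => i ∈ S l).card := by
          rw [Finset.card_filter]
      _ ≤ C := hSload i
end

section
/- Let m ≥ 1 be a natural number, let h ≥ 0 and pmax ≥ 0 be reals, let r be a natural number, and let p : Fin r → Fin m → ℝ satisfy 0 ≤ p l j ≤ pmax for all l, j. Let A = ∑_{l, j} p l j. Then there exist permutations π : Fin r → Equiv.Perm (Fin m) such that, defining the load L i = h + ∑_{l} p l (π l i) for each machine i : Fin m, we have: (i) for all machines i, i', L i - L i' ≤ pmax; and (ii) for every machine i, L i ≤ h + A / m + pmax. -/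
/-- One step: given loads differing by at most pmax and a bag of jobs each in
[0, pmax], there is an assignment keeping the difference bound. -/
lemma bagLPT_step {m : ℕ} (pmax : ℝ) (L q : Fin m → ℝ)
    (hL : ∀ i i', L i - L i' ≤ pmax) (hq : ∀ j, 0 ≤ q j ∧ q j ≤ pmax) :
    ∃ σ : Equiv.Perm (Fin m),
      ∀ i i', (L i + q (σ i)) - (L i' + q (σ i')) ≤ pmax := by
  set s := Tuple.sort L with hs
  set t := Tuple.sort (fun k => -q k) with ht
  have hmonoL : Monotone (L ∘ s) := Tuple.monotone_sort L
  have hmonoq : Monotone ((fun k => -q k) ∘ t) := Tuple.monotone_sort _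
  refine ⟨s.symm.trans t, fun i i' => ?_⟩
  have hi : i = s (s.symm i) := (Equiv.apply_symm_apply s i).symm
  have hi' : i' = s (s.symm i') := (Equiv.apply_symm_apply s i').symm
  set k := s.symm i
  set k' := s.symm i'
  simp only [Equiv.trans_apply]
  rcases le_total k k' with hkk | hkk
  · have h1 : L i ≤ L i' := by rw [hi, hi']; exact hmonoL hkk
    have h2 : q (t k) ≤ pmax := (hq (t k)).2
    have h3 : 0 ≤ q (t k') := (hq (t k')).1
    linarith
  · have h1 : L i - L i' ≤ pmax := hL i i'
    have h2 : -q (t k') ≤ -q (t k) := hmonoq hkk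
    linarith

lemma bagLPT_main {m : ℕ} (pmax : ℝ) (hpmax : 0 ≤ pmax) :
    ∀ (r : ℕ) (p : Fin r → Fin m → ℝ), (∀ l j, 0 ≤ p l j ∧ p l j ≤ pmax) →
    ∃ π : Fin r → Equiv.Perm (Fin m),
      ∀ i i', (∑ l, p l (π l i)) - (∑ l, p l (π l i')) ≤ pmax := by
  intro r
  induction r with
  | zero =>
      intro p hp
      exact ⟨fun l => l.elim0, fun i i' => by simpa using hpmax⟩
  | succ r ih =>
      intro p hp
      obtain ⟨π, hπ⟩ := ih (fun l => p l.castSucc) (fun l j => hp l.castSucc j)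
      obtain ⟨σ, hσ⟩ := bagLPT_step pmax
        (fun i => ∑ l, p l.castSucc (π l i)) (p (Fin.last r)) hπ (hp (Fin.last r))
      refine ⟨Fin.lastCases σ π, fun i i' => ?_⟩
      have key : ∀ j, ∑ l, p l ((Fin.lastCases σ π : ∀ _, Equiv.Perm (Fin m)) l j)
          = (∑ l, p l.castSucc (π l j)) + p (Fin.last r) (σ j) := by
        intro j
        rw [Fin.sum_univ_castSucc]
        simp
      rw [key i, key i']
      exact hσ i i'

theorem stmt_5 (m : ℕ) (hm : 1 ≤ m) (h pmax : ℝ) (hh : 0 ≤ h) (hpmax : 0 ≤ pmax)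
    (r : ℕ) (p : Fin r → Fin m → ℝ)
    (hp : ∀ l j, 0 ≤ p l j ∧ p l j ≤ pmax) :
    ∃ π : Fin r → Equiv.Perm (Fin m),
      (∀ i i' : Fin m,
        (h + ∑ l, p l (π l i)) - (h + ∑ l, p l (π l i')) ≤ pmax) ∧
      (∀ i : Fin m,
        h + ∑ l, p l (π l i) ≤ h + (∑ l, ∑ j, p l j) / (m : ℝ) + pmax) := by
  obtain ⟨π, hπ⟩ := bagLPT_main pmax hpmax r p hp
  refine ⟨π, fun i i' => by have := hπ i i'; linarith, ?_⟩
  have hmpos : (0 : ℝ) < m := by exact_mod_cast hm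
  have hne : (Finset.univ : Finset (Fin m)).Nonempty := by
    have : 0 < m := hm
    exact ⟨⟨0, this⟩, Finset.mem_univ _⟩
  obtain ⟨i0, _, hi0⟩ := Finset.exists_min_image Finset.univ
    (fun i => ∑ l, p l (π l i)) hne
  have hsum : ∑ i, ∑ l, p l (π l i) = ∑ l, ∑ j, p l j := by
    rw [Finset.sum_comm]
    exact Finset.sum_congr rfl fun l _ => Equiv.sum_comp (π l) (p l)
  have hmin : (m : ℝ) * (∑ l, p l (π l i0)) ≤ ∑ l, ∑ j, p l j := by
    rw [← hsum]
    calc (m : ℝ) * (∑ l, p l (π l i0))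
        = ∑ _i : Fin m, (∑ l, p l (π l i0)) := by
          rw [Finset.sum_const, Finset.card_univ, Fintype.card_fin, nsmul_eq_mul]
      _ ≤ ∑ i, ∑ l, p l (π l i) :=
          Finset.sum_le_sum fun i _ => hi0 i (Finset.mem_univ i)
  have hmin' : (∑ l, p l (π l i0)) ≤ (∑ l, ∑ j, p l j) / (m : ℝ) :=
    (le_div_iff₀' hmpos).mpr hmin
  intro i
  have := hπ i i0
  linarith
end
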